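/- arXiv:2001.02797 — 2 statements merged into one kernel-verified Lean document; each statement's English description precedes it below -/
import Mathlib

section
/- Let h : ℕ → ℝ and V ~ Poisson(α) with E[|Δ²h(V)|] ≤ ν < ∞. Then for all x ∈ [0, α], the derivative of ĥ(x) = E[h(Poisson(x))] satisfies |ĥ'(x)| ≤ (e^α - 1)ν + |h(1) - h(0)|. -/
open scoped BigOperators

/-- Probability mass function of the Poisson distribution with parameter `x`. -/
noncomputable def poiPMF (x : ℝ) (k : ℕ) : ℝ := Real.exp (-x) * x ^ k / (Nat.factorial k)

lemma poiPMF_nonneg {x : ℝ} (hx : 0 ≤ x) (k : ℕ) : 0 ≤ poiPMF x k := by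
  unfold poiPMF; positivity

lemma poiPMF_eq (x : ℝ) : poiPMF x = fun k => Real.exp (-x) * (x ^ k / (Nat.factorial k)) := by
  funext k; unfold poiPMF; ring

lemma summable_poiPMF (x : ℝ) : Summable (poiPMF x) := by
  rw [poiPMF_eq]
  exact (Real.summable_pow_div_factorial x).mul_left _

lemma tsum_pow_div_factorial (x : ℝ) :
    ∑' k : ℕ, x ^ k / (Nat.factorial k : ℝ) = Real.exp x := by
  rw [Real.exp_eq_exp_ℝ, NormedSpace.exp_eq_tsum_div]

lemma tsum_poiPMF (x : ℝ) : ∑' k, poiPMF x k = 1 := by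
  rw [poiPMF_eq, tsum_mul_left, tsum_pow_div_factorial, ← Real.exp_add]
  simp

lemma tsum_shift_exp (x : ℝ) :
    ∑' m : ℕ, x ^ (m + 1) / (Nat.factorial (m + 1) : ℝ) = Real.exp x - 1 := by
  have h := Summable.tsum_eq_zero_add (Real.summable_pow_div_factorial x)
  rw [tsum_pow_div_factorial] at h
  simp only [pow_zero, Nat.factorial_zero, Nat.cast_one, div_one] at h
  linarith

/-- Tail bound: `∑_{k>j} poiPMF x k ≤ (e^α - 1) poiPMF α j` for `0 ≤ x ≤ α`. -/
lemma tail_bound {x α : ℝ} (hx : 0 ≤ x) (hxα : x ≤ α) (j : ℕ) :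
    ∑' k : ℕ, (if j < k then poiPMF x k else 0) ≤ (Real.exp α - 1) * poiPMF α j := by
  have hα0 : (0 : ℝ) ≤ α := hx.trans hxα
  set C : ℝ := Real.exp (-x) * x ^ j / (Nat.factorial j) with hC
  have hC0 : 0 ≤ C := poiPMF_nonneg hx j
  set u : ℕ → ℝ := fun k => if j < k then C * (x ^ (k - j) / (Nat.factorial (k - j))) else 0
    with hu
  -- summability of u
  have hsu : Summable u := by
    rw [← summable_nat_add_iff (j + 1)]
    have : (fun m => u (m + (j + 1))) =
        fun m => C * (x ^ (m + 1) / (Nat.factorial (m + 1))) := by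
      funext m
      have h1 : j < m + (j + 1) := by omega
      have h2 : m + (j + 1) - j = m + 1 := by omega
      simp [hu, h1, h2]
    rw [this]
    exact (((Real.summable_pow_div_factorial x).comp_injective
      (add_left_injective 1)).mul_left C)
  -- termwise bound
  have hterm : ∀ k, (if j < k then poiPMF x k else 0) ≤ u k := by
    intro k
    by_cases hjk : j < k
    · simp only [hu, hjk, if_pos]
      have hjle : j ≤ k := hjk.le
      have hxk : x ^ k = x ^ j * x ^ (k - j) := by
        rw [← pow_add]; congr 1; omega
      have hfac : (Nat.factorial j : ℝ) * (Nat.factorial (k - j)) ≤ Nat.factorial k := by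
        have := Nat.factorial_mul_factorial_dvd_factorial hjle
        exact_mod_cast Nat.cast_le.mpr (Nat.le_of_dvd (Nat.factorial_pos k) this)
      have hnum : 0 ≤ Real.exp (-x) * x ^ k := by positivity
      have hpos : (0 : ℝ) < (Nat.factorial j : ℝ) * (Nat.factorial (k - j)) := by positivity
      have := div_le_div_of_nonneg_left hnum hpos hfac
      calc poiPMF x k = Real.exp (-x) * x ^ k / (Nat.factorial k) := rfl
        _ ≤ Real.exp (-x) * x ^ k / ((Nat.factorial j : ℝ) * (Nat.factorial (k - j))) := this
        _ = C * (x ^ (k - j) / (Nat.factorial (k - j))) := by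
            rw [hC, hxk]; field_simp
    · simp [hu, hjk]
  have hsv : Summable (fun k => if j < k then poiPMF x k else 0) := by
    apply Summable.of_nonneg_of_le _ hterm hsu
    intro k
    by_cases hjk : j < k <;> simp [hjk, poiPMF_nonneg hx]
  -- compute tsum u
  have htu : ∑' k, u k = C * (Real.exp x - 1) := by
    have hsplit := Summable.sum_add_tsum_nat_add (f := u) (j + 1) hsu
    have hz : ∑ i ∈ Finset.range (j + 1), u i = 0 := by
      apply Finset.sum_eq_zero
      intro i hi
      simp only [Finset.mem_range] at hi
      have : ¬ j < i := by omega
      simp [hu, this]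
    have hshift : (fun m => u (m + (j + 1))) =
        fun m => C * (x ^ (m + 1) / (Nat.factorial (m + 1))) := by
      funext m
      have h1 : j < m + (j + 1) := by omega
      have h2 : m + (j + 1) - j = m + 1 := by omega
      simp [hu, h1, h2]
    rw [hz, zero_add, hshift] at hsplit
    rw [← hsplit, tsum_mul_left, tsum_shift_exp]
  have key : C * (Real.exp x - 1) ≤ (Real.exp α - 1) * poiPMF α j := by
    have hex : Real.exp (-x) * Real.exp x = 1 := by rw [← Real.exp_add]; simp
    have heα : Real.exp (-α) * Real.exp α = 1 := by rw [← Real.exp_add]; simp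
    have hL : C * (Real.exp x - 1) = x ^ j / (Nat.factorial j) * (1 - Real.exp (-x)) := by
      rw [hC]; field_simp; linear_combination x ^ j * hex
    have hR : (Real.exp α - 1) * poiPMF α j
        = α ^ j / (Nat.factorial j) * (1 - Real.exp (-α)) := by
      unfold poiPMF; field_simp; linear_combination α ^ j * heα
    rw [hL, hR]
    have h1 : x ^ j ≤ α ^ j := pow_le_pow_left₀ hx hxα j
    have h2 : 1 - Real.exp (-x) ≤ 1 - Real.exp (-α) := by
      have := Real.exp_le_exp.mpr (neg_le_neg hxα)
      linarith
    have h3 : 0 ≤ 1 - Real.exp (-x) := by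
      have : Real.exp (-x) ≤ 1 := Real.exp_le_one_iff.mpr (by linarith)
      linarith
    have h4 : (0:ℝ) < Nat.factorial j := by positivity
    have h5 : 0 ≤ x ^ j := by positivity
    apply mul_le_mul _ h2 h3 (by positivity)
    gcongr
  calc ∑' k, (if j < k then poiPMF x k else 0) ≤ ∑' k, u k := Summable.tsum_le_tsum hterm hsv hsu
    _ = C * (Real.exp x - 1) := htu
    _ ≤ (Real.exp α - 1) * poiPMF α j := key

set_option maxHeartbeats 1000000 in
/-- If `E[|Δ²h(V)|] ≤ ν < ∞` for `V ~ Poisson(α)`, then for all `x ∈ [0, α]` the derivative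
`ĥ'(x) = ∑ (h(k+1) - h(k)) e^{-x} x^k / k!` of `ĥ` satisfies
`|ĥ'(x)| ≤ (e^α - 1) ν + |h 1 - h 0|`. -/
theorem stmt6 (h : ℕ → ℝ) (α ν : ℝ) (hα : 0 < α)
    (hsum : Summable fun k => |h (k + 2) - 2 * h (k + 1) + h k| * poiPMF α k)
    (hν : ∑' k : ℕ, |h (k + 2) - 2 * h (k + 1) + h k| * poiPMF α k ≤ ν) :
    ∀ x ∈ Set.Icc (0 : ℝ) α,
      |∑' k : ℕ, (h (k + 1) - h k) * poiPMF x k| ≤ (Real.exp α - 1) * ν + |h 1 - h 0| := by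
  intro x hxmem
  obtain ⟨hx0, hxα⟩ := hxmem
  have hα0 : (0:ℝ) ≤ α := hα.le
  set a : ℕ → ℝ := fun j => |h (j + 2) - 2 * h (j + 1) + h j| with ha
  have ha0 : ∀ j, 0 ≤ a j := fun j => abs_nonneg _
  have hν0 : 0 ≤ ν := le_trans (tsum_nonneg fun k =>
    mul_nonneg (abs_nonneg _) (poiPMF_nonneg hα0 k)) hν
  have hexpα : 0 ≤ Real.exp α - 1 := by
    have : (1:ℝ) ≤ Real.exp α := Real.one_le_exp hα0
    linarith
  -- Step A: telescoping bound
  have bound_g : ∀ k, |h (k + 1) - h k| ≤ |h 1 - h 0| + ∑ j ∈ Finset.range k, a j := by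
    intro k
    induction k with
    | zero => simp
    | succ k ih =>
      rw [Finset.sum_range_succ]
      have heq : h (k + 1 + 1) - h (k + 1) =
          (h (k + 2) - 2 * h (k + 1) + h k) + (h (k + 1) - h k) := by
        have : k + 1 + 1 = k + 2 := rfl
        rw [this]; ring
      calc |h (k + 1 + 1) - h (k + 1)| ≤ a k + |h (k + 1) - h k| := by
            rw [heq]; exact abs_add_le _ _
        _ ≤ |h 1 - h 0| + (∑ j ∈ Finset.range k, a j + a k) := by linarith
  -- Step C: partial sum bound for B
  set B : ℕ → ℝ := fun k => (∑ j ∈ Finset.range k, a j) * poiPMF x k with hB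
  have hB0 : ∀ k, 0 ≤ B k := fun k =>
    mul_nonneg (Finset.sum_nonneg fun j _ => ha0 j) (poiPMF_nonneg hx0 k)
  have hpartial : ∀ N, ∑ k ∈ Finset.range N, B k ≤ (Real.exp α - 1) * ν := by
    intro N
    have hswap : ∑ k ∈ Finset.range N, B k =
        ∑ j ∈ Finset.range N, a j * ∑ k ∈ Finset.range N, (if j < k then poiPMF x k else 0) := by
      calc ∑ k ∈ Finset.range N, B k
          = ∑ k ∈ Finset.range N, ∑ j ∈ Finset.range N,
              (if j < k then a j * poiPMF x k else 0) := by
            apply Finset.sum_congr rfl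
            intro k hk
            simp only [Finset.mem_range] at hk
            show (∑ j ∈ Finset.range k, a j) * poiPMF x k = _
            rw [Finset.sum_mul]
            have hset : Finset.range k = (Finset.range N).filter (· < k) := by
              ext i; simp only [Finset.mem_range, Finset.mem_filter]; omega
            rw [hset, Finset.sum_filter]
        _ = ∑ j ∈ Finset.range N, ∑ k ∈ Finset.range N,
              (if j < k then a j * poiPMF x k else 0) := Finset.sum_comm
        _ = _ := by
            apply Finset.sum_congr rfl
            intro j _
            rw [Finset.mul_sum]
            apply Finset.sum_congr rfl
            intro k _
            by_cases hjk : j < k <;> simp [hjk]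
    rw [hswap]
    have hstep : ∀ j ∈ Finset.range N,
        a j * ∑ k ∈ Finset.range N, (if j < k then poiPMF x k else 0)
          ≤ (Real.exp α - 1) * (a j * poiPMF α j) := by
      intro j _
      have hsv : Summable (fun k => if j < k then poiPMF x k else 0) := by
        apply Summable.of_nonneg_of_le _ _ (summable_poiPMF x)
        · intro k; by_cases hjk : j < k <;> simp [hjk, poiPMF_nonneg hx0]
        · intro k; by_cases hjk : j < k <;> simp [hjk, poiPMF_nonneg hx0]
      have h1 : ∑ k ∈ Finset.range N, (if j < k then poiPMF x k else 0)
          ≤ ∑' k, (if j < k then poiPMF x k else 0) := by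
        apply Summable.sum_le_tsum _ _ hsv
        intro k _; by_cases hjk : j < k <;> simp [hjk, poiPMF_nonneg hx0]
      have h2 := tail_bound hx0 hxα j
      calc a j * ∑ k ∈ Finset.range N, (if j < k then poiPMF x k else 0)
          ≤ a j * ((Real.exp α - 1) * poiPMF α j) :=
            mul_le_mul_of_nonneg_left (h1.trans h2) (ha0 j)
        _ = (Real.exp α - 1) * (a j * poiPMF α j) := by ring
    calc ∑ j ∈ Finset.range N, a j * ∑ k ∈ Finset.range N, (if j < k then poiPMF x k else 0)
        ≤ ∑ j ∈ Finset.range N, (Real.exp α - 1) * (a j * poiPMF α j) :=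
          Finset.sum_le_sum hstep
      _ = (Real.exp α - 1) * ∑ j ∈ Finset.range N, a j * poiPMF α j := by
          rw [Finset.mul_sum]
      _ ≤ (Real.exp α - 1) * ν := by
          apply mul_le_mul_of_nonneg_left _ hexpα
          refine le_trans (Summable.sum_le_tsum _ (fun k _ =>
            mul_nonneg (abs_nonneg _) (poiPMF_nonneg hα0 k)) hsum) hν
  have hBsum : Summable B := summable_of_sum_range_le hB0 hpartial
  have hBle : ∑' k, B k ≤ (Real.exp α - 1) * ν :=
    Real.tsum_le_of_sum_range_le hB0 hpartial
  -- Step E: dominating series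
  set M : ℕ → ℝ := fun k => |h 1 - h 0| * poiPMF x k + B k with hM
  have hMsum : Summable M := ((summable_poiPMF x).mul_left _).add hBsum
  have hdom : ∀ k, |(h (k + 1) - h k) * poiPMF x k| ≤ M k := by
    intro k
    rw [abs_mul, abs_of_nonneg (poiPMF_nonneg hx0 k)]
    calc |h (k + 1) - h k| * poiPMF x k
        ≤ (|h 1 - h 0| + ∑ j ∈ Finset.range k, a j) * poiPMF x k :=
          mul_le_mul_of_nonneg_right (bound_g k) (poiPMF_nonneg hx0 k)
      _ = M k := by simp only [hM, hB]; ring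
  have habs : Summable (fun k => |(h (k + 1) - h k) * poiPMF x k|) :=
    Summable.of_nonneg_of_le (fun k => abs_nonneg _) hdom hMsum
  have hgsum : Summable (fun k => (h (k + 1) - h k) * poiPMF x k) := by
    apply habs.of_abs
  calc |∑' k : ℕ, (h (k + 1) - h k) * poiPMF x k|
      ≤ ∑' k, |(h (k + 1) - h k) * poiPMF x k| := by
        have := norm_tsum_le_tsum_norm (f := fun k : ℕ => (h (k + 1) - h k) * poiPMF x k)
          (by simpa only [Real.norm_eq_abs] using habs)
        simpa only [Real.norm_eq_abs] using this
    _ ≤ ∑' k, M k := Summable.tsum_le_tsum hdom habs hMsum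
    _ = |h 1 - h 0| * ∑' k, poiPMF x k + ∑' k, B k := by
        rw [hM, Summable.tsum_add ((summable_poiPMF x).mul_left _) hBsum, tsum_mul_left]
    _ = |h 1 - h 0| + ∑' k, B k := by rw [tsum_poiPMF]; ring
    _ ≤ (Real.exp α - 1) * ν + |h 1 - h 0| := by linarith
end

section
/- Let Γⁿ be a sequence of weighted congestion games with wⁿ → 0 and dⁿ_t → d_t, and let σⁿ be an arbitrary sequence of mixed strategy profiles whose expected flow-load pairs (yⁿ, xⁿ) converge to (y, x). Then the expected social cost ESC(σⁿ) = E[∑_e Xⁿ_e c_e(Xⁿ_e)] converges to SC(y, x) = ∑_e x_e c_e(x_e). -/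
open scoped BigOperators Classical
open Filter Topology

section Defs

variable {E T N : Type*}

noncomputable def expVal [Fintype E] [Fintype N] (σ : N → Finset E → ℝ)
    (g : (N → Finset E) → ℝ) : ℝ :=
  ∑ a : N → Finset E, (∏ i, σ i (a i)) * g a

noncomputable def loadW [Fintype E] [Fintype N] (w : N → ℝ) (e : E)
    (a : N → Finset E) : ℝ :=
  ∑ i, if e ∈ a i then w i else 0

noncomputable def flowW [Fintype E] [Fintype N] (w : N → ℝ) (tm : N → T) (t : T)
    (s : Finset E) (a : N → Finset E) : ℝ :=
  ∑ i, if tm i = t ∧ a i = s then w i else 0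

def IsMixed [Fintype E] (strat : T → Finset (Finset E)) (tm : N → T)
    (σ : N → Finset E → ℝ) : Prop :=
  (∀ i s, 0 ≤ σ i s) ∧ (∀ i s, s ∉ strat (tm i) → σ i s = 0) ∧
  (∀ i, ∑ s ∈ strat (tm i), σ i s = 1)

/-- Expected social cost `E[∑_e X_e c_e(X_e)]` of a mixed strategy profile. -/
noncomputable def ESC [Fintype E] [Fintype N] (c : E → ℝ → ℝ) (w : N → ℝ)
    (σ : N → Finset E → ℝ) : ℝ :=
  expVal σ fun a => ∑ e, loadW w e a * c e (loadW w e a)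

end Defs

section Aux2


variable {E N : Type*} [Fintype E] [Fintype N]

lemma expVal_add (σ : N → Finset E → ℝ) (g h : (N → Finset E) → ℝ) :
    expVal σ (fun a => g a + h a) = expVal σ g + expVal σ h := by
  simp [expVal, mul_add, Finset.sum_add_distrib]

lemma expVal_sum {ι : Type*} (σ : N → Finset E → ℝ) (s : Finset ι)
    (g : ι → (N → Finset E) → ℝ) :
    expVal σ (fun a => ∑ k ∈ s, g k a) = ∑ k ∈ s, expVal σ (g k) := by
  simp only [expVal, Finset.mul_sum]
  exact Finset.sum_comm

lemma expVal_smul (σ : N → Finset E → ℝ) (b : ℝ) (g : (N → Finset E) → ℝ) :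
    expVal σ (fun a => b * g a) = b * expVal σ g := by
  unfold expVal
  rw [Finset.mul_sum]
  exact Finset.sum_congr rfl fun a _ => by ring

lemma expVal_prod (σ : N → Finset E → ℝ) (F : N → Finset E → ℝ) :
    expVal σ (fun a => ∏ i, F i (a i)) = ∏ i, ∑ s : Finset E, σ i s * F i s := by
  classical
  rw [Finset.prod_univ_sum]
  rw [Fintype.piFinset_univ]
  unfold expVal
  exact Finset.sum_congr rfl fun a _ => by rw [Finset.prod_mul_distrib]

lemma expVal_const (σ : N → Finset E → ℝ)
    (hσ1 : ∀ i, ∑ s : Finset E, σ i s = 1) (r : ℝ) :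
    expVal σ (fun _ => r) = r := by
  have h := expVal_prod σ (fun _ _ => 1)
  simp only [Finset.prod_const_one, mul_one] at h
  have h1 : expVal σ (fun _ => (1:ℝ)) = 1 := by
    rw [h]; simp [hσ1]
  have : expVal σ (fun _ => r) = r * expVal σ (fun _ => (1:ℝ)) := by
    rw [← expVal_smul]; simp
  rw [this, h1, mul_one]

lemma expVal_mono (σ : N → Finset E → ℝ) (hσ0 : ∀ i s, 0 ≤ σ i s)
    (g h : (N → Finset E) → ℝ) (hgh : ∀ a, g a ≤ h a) :
    expVal σ g ≤ expVal σ h := by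
  apply Finset.sum_le_sum
  intro a _
  exact mul_le_mul_of_nonneg_left (hgh a) (Finset.prod_nonneg fun i _ => hσ0 i (a i))

lemma abs_expVal_le (σ : N → Finset E → ℝ) (hσ0 : ∀ i s, 0 ≤ σ i s)
    (g : (N → Finset E) → ℝ) :
    |expVal σ g| ≤ expVal σ (fun a => |g a|) := by
  refine (Finset.abs_sum_le_sum_abs _ _).trans ?_
  apply Finset.sum_le_sum
  intro a _
  rw [abs_mul, abs_of_nonneg (Finset.prod_nonneg fun i _ => hσ0 i (a i))]

lemma expVal_coord (σ : N → Finset E → ℝ)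
    (hσ1 : ∀ i, ∑ s : Finset E, σ i s = 1) (i : N) (f : Finset E → ℝ) :
    expVal σ (fun a => f (a i)) = ∑ s : Finset E, σ i s * f s := by
  classical
  have h1 : (fun a : N → Finset E => f (a i))
      = fun a => ∏ k, (if k = i then f (a k) else 1) := by
    funext a
    rw [Finset.prod_ite_eq' Finset.univ i (fun k => f (a k))]
    simp
  rw [h1, expVal_prod σ (fun k s => if k = i then f s else 1)]
  have h2 : ∀ k : N, (∑ s : Finset E, σ k s * (if k = i then f s else 1))
      = if k = i then (∑ s : Finset E, σ k s * f s) else 1 := by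
    intro k
    split_ifs with h
    · rfl
    · simp [hσ1 k]
  rw [Finset.prod_congr rfl fun k _ => h2 k, Finset.prod_ite_eq' Finset.univ i]
  simp

lemma prod_eq_two {α : Type*} [Fintype α] {i j : α} (hij : i ≠ j) (h : α → ℝ)
    (hone : ∀ k, k ≠ i → k ≠ j → h k = 1) : ∏ k, h k = h i * h j := by
  classical
  rw [← Finset.mul_prod_erase Finset.univ h (Finset.mem_univ i)]
  rw [← Finset.mul_prod_erase (Finset.univ.erase i) h
    (Finset.mem_erase.mpr ⟨hij.symm, Finset.mem_univ j⟩)]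
  have hrest : ∏ k ∈ (Finset.univ.erase i).erase j, h k = 1 := by
    apply Finset.prod_eq_one
    intro k hk
    rw [Finset.mem_erase, Finset.mem_erase] at hk
    exact hone k hk.2.1 hk.1
  rw [hrest, mul_one]

lemma expVal_coord2 (σ : N → Finset E → ℝ)
    (hσ1 : ∀ i, ∑ s : Finset E, σ i s = 1) {i j : N} (hij : i ≠ j)
    (f g : Finset E → ℝ) :
    expVal σ (fun a => f (a i) * g (a j))
      = (∑ s : Finset E, σ i s * f s) * (∑ s : Finset E, σ j s * g s) := by
  classical
  have h1 : (fun a : N → Finset E => f (a i) * g (a j))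
      = fun a => ∏ k, (if k = i then f (a k) else if k = j then g (a k) else 1) := by
    funext a
    rw [prod_eq_two hij _ (fun k hki hkj => by simp [hki, hkj])]
    simp [hij, hij.symm]
  rw [h1, expVal_prod σ (fun k s => if k = i then f s else if k = j then g s else 1)]
  have h2 : ∀ k : N, (∑ s : Finset E, σ k s * (if k = i then f s else if k = j then g s else 1))
      = if k = i then (∑ s : Finset E, σ i s * f s)
        else if k = j then (∑ s : Finset E, σ j s * g s) else 1 := by
    intro k
    split_ifs with h h'
    · subst h; rfl
    · subst h'; simp [h]
    · simp [h, h', hσ1 k]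
  rw [Finset.prod_congr rfl fun k _ => h2 k,
    prod_eq_two hij _ (fun k hki hkj => by simp [hki, hkj])]
  simp [hij, hij.symm]

end Aux2

section Var

variable {E N : Type*} [Fintype E] [Fintype N]

lemma loadW_nonneg (w : N → ℝ) (hw : ∀ i, 0 ≤ w i) (e : E) (a : N → Finset E) :
    0 ≤ loadW w e a :=
  Finset.sum_nonneg fun i _ => by split_ifs <;> simp [hw i]

lemma loadW_le (w : N → ℝ) (hw : ∀ i, 0 ≤ w i) (e : E) (a : N → Finset E) :
    loadW w e a ≤ ∑ i, w i :=
  Finset.sum_le_sum fun i _ => by split_ifs <;> simp [hw i]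

lemma secondMoment (σ : N → Finset E → ℝ) (hσ0 : ∀ i s, 0 ≤ σ i s)
    (hσ1 : ∀ i, ∑ s : Finset E, σ i s = 1) (w : N → ℝ) (hw : ∀ i, 0 ≤ w i)
    (e : E) (v : ℝ) :
    expVal σ (fun a => (loadW w e a - v)^2)
      ≤ (expVal σ (loadW w e) - v)^2 + ∑ i, (w i)^2 := by
  classical
  set χ : Finset E → ℝ := fun s => if e ∈ s then 1 else 0 with hχ
  set p : N → ℝ := fun i => ∑ s : Finset E, σ i s * χ s with hp
  have hχχ : ∀ s, χ s * χ s = χ s := by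
    intro s; by_cases h : e ∈ s <;> simp [hχ, h]
  have hp0 : ∀ i, 0 ≤ p i := by
    intro i
    exact Finset.sum_nonneg fun s _ => mul_nonneg (hσ0 i s) (by by_cases h : e ∈ s <;> simp [hχ, h])
  have hp1 : ∀ i, p i ≤ 1 := by
    intro i
    rw [← hσ1 i]
    apply Finset.sum_le_sum
    intro s _
    by_cases h : e ∈ s <;> simp [hχ, h, hσ0 i s]
  have hX : ∀ a, loadW w e a = ∑ i, w i * χ (a i) := by
    intro a
    exact Finset.sum_congr rfl fun i _ => by by_cases h : e ∈ a i <;> simp [hχ, h]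
  -- mean
  have hmean : expVal σ (loadW w e) = ∑ i, w i * p i := by
    have : loadW w e = fun a => ∑ i, w i * χ (a i) := funext hX
    rw [this, expVal_sum]
    refine Finset.sum_congr rfl fun i _ => ?_
    rw [expVal_smul σ (w i) (fun a => χ (a i)), expVal_coord σ hσ1 i χ]
  -- second moment
  have hsq : expVal σ (fun a => (loadW w e a)^2)
      = ∑ i, ∑ j, (if i = j then (w i)^2 * p i else (w i * p i) * (w j * p j)) := by
    have h1 : (fun a => (loadW w e a)^2)
        = fun a => ∑ i, ∑ j, (w i * χ (a i)) * (w j * χ (a j)) := by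
      funext a
      rw [sq, hX a, Finset.sum_mul_sum]
    rw [h1, expVal_sum]
    refine Finset.sum_congr rfl fun i _ => ?_
    rw [expVal_sum]
    refine Finset.sum_congr rfl fun j _ => ?_
    by_cases hij : i = j
    · subst hij
      rw [if_pos rfl]
      have h2 : (fun a : N → Finset E => (w i * χ (a i)) * (w i * χ (a i)))
          = fun a => (fun s => (w i)^2 * χ s) (a i) := by
        funext a
        have := hχχ (a i)
        simp only
        nlinarith [hχχ (a i)]
      rw [h2, expVal_coord σ hσ1 i (fun s => (w i)^2 * χ s)]
      rw [Finset.mul_sum]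
      refine Finset.sum_congr rfl fun s _ => by ring
    · simp only [if_neg hij]
      rw [expVal_coord2 σ hσ1 hij (fun s => w i * χ s) (fun s => w j * χ s)]
      congr 1
      · rw [Finset.mul_sum]; exact Finset.sum_congr rfl fun s _ => by ring
      · rw [Finset.mul_sum]; exact Finset.sum_congr rfl fun s _ => by ring
  -- variance bound
  have hvar : expVal σ (fun a => (loadW w e a)^2) - (expVal σ (loadW w e))^2
      ≤ ∑ i, (w i)^2 := by
    rw [hsq, hmean, sq (∑ i, w i * p i), Finset.sum_mul_sum, ← Finset.sum_sub_distrib]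
    apply Finset.sum_le_sum
    intro i _
    rw [← Finset.sum_sub_distrib]
    have : ∀ j ∈ Finset.univ, ((if i = j then (w i)^2 * p i else (w i * p i) * (w j * p j))
        - (w i * p i) * (w j * p j)) ≤ (if i = j then (w i)^2 else 0) := by
      intro j _
      by_cases hij : i = j
      · subst hij
        simp only [if_pos rfl, if_true]
        nlinarith [hp0 i, hp1 i, sq_nonneg (w i)]
      · simp [hij]
    refine (Finset.sum_le_sum this).trans ?_
    simp
  -- expand (X - v)^2
  have hexp : expVal σ (fun a => (loadW w e a - v)^2)
      = expVal σ (fun a => (loadW w e a)^2) - 2*v*(expVal σ (loadW w e)) + v^2 := by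
    have h1 : (fun a => (loadW w e a - v)^2)
        = fun a => (loadW w e a)^2 + ((-(2*v)) * loadW w e a + v^2) := by
      funext a; ring
    rw [h1, expVal_add, expVal_add σ (fun a => (-(2*v)) * loadW w e a) (fun _ => v^2),
      expVal_smul, expVal_const σ hσ1]
    ring
  rw [hexp]
  nlinarith [hvar]

end Var

lemma expVal_nonneg {E N : Type*} [Fintype E] [Fintype N] (σ : N → Finset E → ℝ)
    (hσ0 : ∀ i s, 0 ≤ σ i s) (g : (N → Finset E) → ℝ) (hg : ∀ a, 0 ≤ g a) :
    0 ≤ expVal σ g :=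
  Finset.sum_nonneg fun a _ => mul_nonneg (Finset.prod_nonneg fun i _ => hσ0 i (a i)) (hg a)

/-- Convergence of the expected social cost: for a sequence of weighted congestion games with
maximal weight tending to zero and per-type aggregate demands converging, and any sequence of
mixed strategy profiles whose expected flow-load pairs converge to `(y, x)`, the expected
social cost converges to `SC(y, x) = ∑_e x_e c_e(x_e)`. -/
theorem stmt14 {E T : Type*} [Fintype E] [Fintype T]
    (strat : T → Finset (Finset E))
    (c : E → ℝ → ℝ) (hc : ∀ e, Continuous (c e)) (hmono : ∀ e, Monotone (c e))
    (P : ℕ → Type) [∀ n, Fintype (P n)]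
    (w : ∀ n, P n → ℝ) (hw : ∀ n i, 0 ≤ w n i)
    (tm : ∀ n, P n → T) (d : T → ℝ)
    (hwmax : ∀ ε > (0 : ℝ), ∀ᶠ n in atTop, ∀ i : P n, w n i < ε)
    (hdem : ∀ t, Tendsto (fun n => ∑ i : P n, if tm n i = t then w n i else 0)
      atTop (nhds (d t)))
    (σ : ∀ n, P n → Finset E → ℝ) (hmix : ∀ n, IsMixed strat (tm n) (σ n))
    (y : T → Finset E → ℝ) (x : E → ℝ)
    (hy : ∀ t s, Tendsto (fun n => expVal (σ n) (flowW (w n) (tm n) t s))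
      atTop (nhds (y t s)))
    (hx : ∀ e, Tendsto (fun n => expVal (σ n) (loadW (w n) e)) atTop (nhds (x e))) :
    Tendsto (fun n => ESC c (w n) (σ n)) atTop (nhds (∑ e, x e * c e (x e))) := by
  classical
  have hσ0 : ∀ n i s, 0 ≤ σ n i s := fun n => (hmix n).1
  have hσ1 : ∀ n i, ∑ s : Finset E, σ n i s = 1 := by
    intro n i
    rw [← (hmix n).2.2 i]
    exact (Finset.sum_subset (Finset.subset_univ _)
      fun s _ hs => (hmix n).2.1 i s hs).symm
  set W : ℕ → ℝ := fun n => ∑ i : P n, w n i with hWdef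
  have hWt : Tendsto W atTop (𝓝 (∑ t, d t)) := by
    have h1 : ∀ n, W n = ∑ t, ∑ i : P n, if tm n i = t then w n i else 0 := by
      intro n
      rw [Finset.sum_comm]
      exact Finset.sum_congr rfl fun i _ => by simp
    exact (tendsto_finset_sum Finset.univ fun t _ => hdem t).congr fun n => (h1 n).symm
  set D : ℝ := ∑ t, d t with hDdef
  have hD0 : 0 ≤ D :=
    ge_of_tendsto' hWt fun n => Finset.sum_nonneg fun i _ => hw n i
  set M : ℝ := D + 1 with hMdef
  have hM0 : 0 < M := by simp only [hMdef]; linarith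
  have hWev : ∀ᶠ n in atTop, W n ≤ M :=
    (hWt.eventually_lt_const (by simp only [hMdef]; linarith : D < M)).mono fun n h => h.le
  have hESC : (fun n => ESC c (w n) (σ n))
      = fun n => ∑ e, expVal (σ n) (fun a => loadW (w n) e a * c e (loadW (w n) e a)) := by
    funext n
    exact expVal_sum (σ n) Finset.univ _
  rw [hESC]
  apply tendsto_finset_sum
  intro e _
  set gf : ℝ → ℝ := fun u => u * c e u with hgfdef
  have hgc : Continuous gf := continuous_id.mul (hc e)
  have hxe0 : 0 ≤ x e :=
    ge_of_tendsto' (hx e) fun n =>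
      expVal_nonneg (σ n) (hσ0 n) _ (loadW_nonneg (w n) (hw n) e)
  have hEle : ∀ n, expVal (σ n) (loadW (w n) e) ≤ W n := by
    intro n
    have h := expVal_mono (σ n) (hσ0 n) (loadW (w n) e) (fun _ => W n)
      (fun a => loadW_le (w n) (hw n) e a)
    rwa [expVal_const (σ n) (hσ1 n)] at h
  have hxeM : x e ≤ M :=
    le_of_tendsto (hx e) (hWev.mono fun n h => (hEle n).trans h)
  show Tendsto (fun n => expVal (σ n) (fun a => gf (loadW (w n) e a))) atTop (𝓝 (gf (x e)))
  rw [Metric.tendsto_nhds]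
  intro ε hε
  obtain ⟨B, hB⟩ := (isCompact_Icc : IsCompact (Set.Icc (0:ℝ) M)).exists_bound_of_continuousOn
    hgc.continuousOn
  have hB0 : 0 ≤ B := le_trans (norm_nonneg _) (hB 0 ⟨le_refl 0, hM0.le⟩)
  obtain ⟨δ, hδ0, hδ⟩ := Metric.uniformContinuousOn_iff.mp
    ((isCompact_Icc : IsCompact (Set.Icc (0:ℝ) M)).uniformContinuousOn_of_continuous
      hgc.continuousOn) (ε/2) (by linarith)
  set K0 : ℝ := (2*B+2)/δ^2 with hK0def
  have hK0 : 0 < K0 := by positivity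
  have hpt : ∀ u ∈ Set.Icc (0:ℝ) M, ∀ v ∈ Set.Icc (0:ℝ) M,
      |gf u - gf v| ≤ ε/2 + K0 * (u - v)^2 := by
    intro u hu v hv
    by_cases h : dist u v < δ
    · have h2 := hδ u hu v hv h
      rw [Real.dist_eq] at h2
      nlinarith [mul_nonneg hK0.le (sq_nonneg (u - v))]
    · have hd : δ ≤ |u - v| := by rw [Real.dist_eq] at h; linarith [not_lt.mp h]
      have h2 : δ^2 ≤ (u-v)^2 := by
        have h3 := mul_self_le_mul_self hδ0.le hd
        rw [abs_mul_abs_self] at h3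
        nlinarith
      have hgu := hB u hu
      have hgv := hB v hv
      rw [Real.norm_eq_abs] at hgu hgv
      have habs2 : |gf u - gf v| ≤ 2*B := by
        have h4 := abs_le.mp hgu
        have h5 := abs_le.mp hgv
        rw [abs_le]
        constructor <;> linarith
      have hK0δ : K0 * δ^2 = 2*B+2 := by
        rw [hK0def]
        field_simp
      have h6 := mul_le_mul_of_nonneg_left h2 hK0.le
      linarith
  set η : ℝ := ε / (2*(K0+1)) with hηdef
  have hη : 0 < η := by positivity
  have hev1 : ∀ᶠ n in atTop, ∀ i, w n i < η/(2*M) := hwmax _ (by positivity)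
  have hev2 : ∀ᶠ n in atTop, (expVal (σ n) (loadW (w n) e) - x e)^2 < η/2 := by
    have h1 : Tendsto (fun n => expVal (σ n) (loadW (w n) e) - x e) atTop (𝓝 0) := by
      simpa using (hx e).sub_const (x e)
    have h2 : Tendsto (fun n => (expVal (σ n) (loadW (w n) e) - x e)^2) atTop (𝓝 0) := by
      have := h1.mul h1
      simpa [sq] using this
    exact h2.eventually_lt_const (by positivity)
  filter_upwards [hev1, hev2, hWev] with n h1 h2 h3
  have hXr : ∀ a, loadW (w n) e a ∈ Set.Icc (0:ℝ) M := fun a =>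
    ⟨loadW_nonneg (w n) (hw n) e a, (loadW_le (w n) (hw n) e a).trans h3⟩
  have hsumw2 : ∑ i, (w n i)^2 ≤ η/2 := by
    calc ∑ i, (w n i)^2 ≤ ∑ i, (η/(2*M)) * w n i :=
          Finset.sum_le_sum fun i _ => by nlinarith [hw n i, h1 i]
      _ = (η/(2*M)) * W n := by rw [Finset.mul_sum]
      _ ≤ (η/(2*M)) * M := mul_le_mul_of_nonneg_left h3 (by positivity)
      _ = η/2 := by field_simp
  have hsm := secondMoment (σ n) (hσ0 n) (hσ1 n) (w n) (hw n) e (x e)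
  have hEsq : expVal (σ n) (fun a => (loadW (w n) e a - x e)^2) ≤ η := by
    calc expVal (σ n) (fun a => (loadW (w n) e a - x e)^2)
        ≤ (expVal (σ n) (loadW (w n) e) - x e)^2 + ∑ i, (w n i)^2 := hsm
      _ ≤ η/2 + η/2 := add_le_add h2.le hsumw2
      _ = η := by ring
  have hdiff : expVal (σ n) (fun a => gf (loadW (w n) e a)) - gf (x e)
      = expVal (σ n) (fun a => gf (loadW (w n) e a) - gf (x e)) := by
    have h4 : (fun a : P n → Finset E => gf (loadW (w n) e a) - gf (x e))
        = fun a => gf (loadW (w n) e a) + (-(gf (x e))) := by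
      funext a; ring
    rw [h4, expVal_add (σ n) (fun a => gf (loadW (w n) e a)) (fun _ => -(gf (x e))),
      expVal_const (σ n) (hσ1 n)]
    ring
  have hlin : expVal (σ n) (fun a => ε/2 + K0 * (loadW (w n) e a - x e)^2)
      = ε/2 + K0 * expVal (σ n) (fun a => (loadW (w n) e a - x e)^2) := by
    rw [expVal_add (σ n) (fun _ => ε/2) (fun a => K0 * (loadW (w n) e a - x e)^2),
      expVal_const (σ n) (hσ1 n),
      expVal_smul (σ n) K0 (fun a => (loadW (w n) e a - x e)^2)]
  have hKη : K0 * η < ε/2 := by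
    have h5 : K0 * η < (K0+1) * η := by nlinarith
    have h6 : (K0+1) * η = ε/2 := by
      rw [hηdef]
      field_simp
    linarith
  have hfinal : |expVal (σ n) (fun a => gf (loadW (w n) e a)) - gf (x e)| ≤ ε/2 + K0 * η := by
    calc |expVal (σ n) (fun a => gf (loadW (w n) e a)) - gf (x e)|
        = |expVal (σ n) (fun a => gf (loadW (w n) e a) - gf (x e))| := by rw [hdiff]
      _ ≤ expVal (σ n) (fun a => |gf (loadW (w n) e a) - gf (x e)|) :=
          abs_expVal_le (σ n) (hσ0 n) _
      _ ≤ expVal (σ n) (fun a => ε/2 + K0 * (loadW (w n) e a - x e)^2) :=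
          expVal_mono (σ n) (hσ0 n) _ _ (fun a => hpt _ (hXr a) _ ⟨hxe0, hxeM⟩)
      _ = ε/2 + K0 * expVal (σ n) (fun a => (loadW (w n) e a - x e)^2) := hlin
      _ ≤ ε/2 + K0 * η := by nlinarith
  rw [Real.dist_eq]
  calc |expVal (σ n) (fun a => gf (loadW (w n) e a)) - gf (x e)| ≤ ε/2 + K0 * η := hfinal
    _ < ε := by linarith
end
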